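/- Let P be an adaptive ε_k-noisy sample of a compact set K with respect to a feature size function f, and let Q be the output of Declutter(P,k). Then for every x ∈ K there exists q ∈ Q with d(x,q) ≤ 5 ε_k f(x). -/

import Mathlib

open Metric

/-- Core loop of the Declutter algorithm: scan the (pre-sorted) list, keeping a point `p`
iff no previously kept point lies in the open ball `B(p, 2 f p)` (w.r.t. distance `d`). -/
noncomputable def declutterAux {X : Type*} (d : X → X → ℝ) (f : X → ℝ) :
    List X → List X → List X
  | Q, [] => Q
  | Q, p :: rest =>
    if ∀ q ∈ Q, 2 * f p ≤ d p q then declutterAux d f (Q ++ [p]) rest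
    else declutterAux d f Q rest

noncomputable def declutter {X : Type*} (d : X → X → ℝ) (f : X → ℝ) (L : List X) : List X :=
  declutterAux d f [] L

/-- `Q` is a possible output of the Declutter algorithm on `P`, with robust distance
function `f`: the points of `P` are processed in nondecreasing order of `f`
(ties broken arbitrarily). -/
def IsDeclutterOutput {X : Type*} (d : X → X → ℝ) (f : X → ℝ) (P : Finset X)
    (Q : List X) : Prop :=
  ∃ L : List X, L.Perm P.toList ∧ L.Pairwise (fun a b => f a ≤ f b) ∧ Q = declutter d f L

variable {X : Type*} [MetricSpace X]

/-- Sorted (nondecreasing) list of distances from `x` to the points of `P`. -/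
noncomputable def sortedDists (P : Finset X) (x : X) : List ℝ :=
  (P.val.map (dist x)).sort (· ≤ ·)

/-- The k-distance: root mean square of the distances to the k nearest neighbors in `P`. -/
noncomputable def kdist (P : Finset X) (k : ℕ) (x : X) : ℝ :=
  Real.sqrt ((1 / (k : ℝ)) * (((sortedDists P x).take k).map (fun r => r ^ 2)).sum)

/-- `P` is an ε_k-noisy sample of `K`:
(1) the k-distance is at most ε on `K`; (2) every point of the space is within
`kdist + ε` of `K`. -/
def NoisySample (P : Finset X) (k : ℕ) (K : Set X) (ε : ℝ) : Prop :=
  (∀ x ∈ K, kdist P k x ≤ ε) ∧ ∀ x : X, infDist x K ≤ kdist P k x + ε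

/-- `P` is an adaptive ε_k-noisy sample of `K` with respect to the feature size `f`. -/
def AdaptiveNoisySample (P : Finset X) (k : ℕ) (K : Set X) (f : X → ℝ) (ε : ℝ) : Prop :=
  (∀ x ∈ K, kdist P k x ≤ ε * f x) ∧
    ∀ y : X, ∀ ybar ∈ K, (∀ z ∈ K, dist y ybar ≤ dist y z) →
      infDist y K ≤ kdist P k y + ε * f ybar

private lemma sort_tail_eq (s : Multiset ℝ) (a : ℝ) (L : List ℝ)
    (h : s.sort (· ≤ ·) = a :: L) : (s.erase a).sort (· ≤ ·) = L := by
  have h1 : ((a :: L : List ℝ) : Multiset ℝ) = s := by rw [← h, Multiset.sort_eq]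
  have h2 : s.erase a = (L : Multiset ℝ) := by
    rw [← h1]; exact Multiset.erase_cons_head a L
  refine (fun hp h1 h2 => List.Perm.eq_of_pairwise' (r := (· ≤ ·)) h1 h2 hp) ?_ ?_ ?_
  · rw [← Multiset.coe_eq_coe, Multiset.sort_eq, h2]
  · exact Multiset.pairwise_sort _ _
  · have hs := Multiset.pairwise_sort s (· ≤ ·)
    rw [h, List.pairwise_cons] at hs
    exact hs.2

private lemma head_le_of_sort {s : Multiset ℝ} {a : ℝ} {L : List ℝ}
    (h : s.sort (· ≤ ·) = a :: L) : ∀ x ∈ s, a ≤ x := by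
  intro x hx
  rw [← Multiset.mem_sort (· ≤ ·), h] at hx
  have hs := Multiset.pairwise_sort s (· ≤ ·)
  rw [h, List.pairwise_cons] at hs
  rcases List.mem_cons.mp hx with rfl | hx
  · exact le_refl x
  · exact hs.1 x hx

private lemma mem_of_sort_head {s : Multiset ℝ} {a : ℝ} {L : List ℝ}
    (h : s.sort (· ≤ ·) = a :: L) : a ∈ s := by
  rw [← Multiset.mem_sort (· ≤ ·), h]; exact List.mem_cons_self

/-- order statistics are monotone under `Multiset.Rel (· ≤ ·)` -/
private lemma forall2_sort_of_rel :
    ∀ (n : ℕ) (s t : Multiset ℝ), s.card = n → Multiset.Rel (· ≤ ·) s t →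
    List.Forall₂ (· ≤ ·) (s.sort (· ≤ ·)) (t.sort (· ≤ ·))
  | 0, s, t, hc, h => by
    have hs : s = 0 := Multiset.card_eq_zero.mp hc
    subst hs
    have ht : t = 0 := Multiset.rel_zero_left.mp h
    subst ht
    simp
  | n + 1, s, t, hc, h => by
    have hts : t.card = n + 1 := by rw [← Multiset.card_eq_card_of_rel h, hc]
    obtain ⟨a, L, hL⟩ : ∃ a L, s.sort (· ≤ ·) = a :: L := by
      rcases hs : s.sort (· ≤ ·) with _ | ⟨a, L⟩
      · exfalso
        have := Multiset.length_sort (α := ℝ) (· ≤ ·) (s := s)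
        rw [hs, hc] at this; simp at this
      · exact ⟨a, L, rfl⟩
    obtain ⟨b, M, hM⟩ : ∃ b M, t.sort (· ≤ ·) = b :: M := by
      rcases hs : t.sort (· ≤ ·) with _ | ⟨b, M⟩
      · exfalso
        have := Multiset.length_sort (α := ℝ) (· ≤ ·) (s := t)
        rw [hs, hts] at this; simp at this
      · exact ⟨b, M, rfl⟩
    rw [hL, hM]
    have hbt : b ∈ t := mem_of_sort_head hM
    have hbmin : ∀ x ∈ t, b ≤ x := head_le_of_sort hM
    have hamin : ∀ x ∈ s, a ≤ x := head_le_of_sort hL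
    have has : a ∈ s := mem_of_sort_head hL
    -- decompose the relation at b
    have ht' : t = b ::ₘ t.erase b := (Multiset.cons_erase hbt).symm
    rw [ht'] at h
    obtain ⟨a₀, s', ha₀b, hrel, hs'⟩ := Multiset.rel_cons_right.mp h
    have hab : a ≤ b := le_trans (hamin a₀ (by rw [hs']; exact Multiset.mem_cons_self _ _)) ha₀b
    have key : Multiset.Rel (· ≤ ·) (s.erase a) (t.erase b) := by
      by_cases hcase : a₀ = a
      · subst hcase
        rw [hs', Multiset.erase_cons_head]
        exact hrel
      · have hams' : a ∈ s' := by
          have : a ∈ a₀ ::ₘ s' := by rw [← hs']; exact has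
          rcases Multiset.mem_cons.mp this with h' | h'
          · exact absurd h'.symm hcase
          · exact h'
        have hs'' : s' = a ::ₘ s'.erase a := (Multiset.cons_erase hams').symm
        rw [hs''] at hrel
        obtain ⟨c, t₂, hac, hrel₂, ht₂⟩ := Multiset.rel_cons_left.mp hrel
        have hserase : s.erase a = a₀ ::ₘ s'.erase a := by
          rw [hs', Multiset.erase_cons_tail_of_mem hams']
        rw [hserase, ht₂]
        refine Multiset.Rel.cons ?_ hrel₂
        have hct : c ∈ t := by
          have : c ∈ t.erase b := by rw [ht₂]; exact Multiset.mem_cons_self _ _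
          exact Multiset.mem_of_mem_erase this
        exact le_trans ha₀b (hbmin c hct)
    have hcard : (s.erase a).card = n := by
      rw [Multiset.card_erase_of_mem has, hc]; rfl
    have ih := forall2_sort_of_rel n (s.erase a) (t.erase b) hcard key
    rw [sort_tail_eq s a L hL, sort_tail_eq t b M hM] at ih
    exact List.Forall₂.cons hab ih


private lemma sortedDists_length (P : Finset X) (x : X) :
    (sortedDists P x).length = P.card := by
  rw [sortedDists, Multiset.length_sort, Multiset.card_map]; rfl

private lemma sortedDists_nonneg (P : Finset X) (x : X) :
    ∀ r ∈ sortedDists P x, 0 ≤ r := by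
  intro r hr
  rw [sortedDists, Multiset.mem_sort] at hr
  obtain ⟨p, _, rfl⟩ := Multiset.mem_map.mp hr
  exact dist_nonneg

/-- sum of squares over take k is at least k * (head)^2 -/
private lemma exists_near (P : Finset X) (k : ℕ) (hk : 1 ≤ k) (hkP : k ≤ P.card) (x : X) :
    ∃ p ∈ P, dist x p ≤ kdist P k x := by
  obtain ⟨a, L, hL⟩ : ∃ a L, sortedDists P x = a :: L := by
    rcases hs : sortedDists P x with _ | ⟨a, L⟩
    · exfalso
      have := sortedDists_length P x
      rw [hs] at this
      simp at this
      omega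
    · exact ⟨a, L, rfl⟩
  have hamem : a ∈ sortedDists P x := by rw [hL]; exact List.mem_cons_self
  have ha' : a ∈ P.val.map (dist x) := by
    rw [sortedDists, Multiset.mem_sort] at hamem; exact hamem
  obtain ⟨p, hp, hpa⟩ := Multiset.mem_map.mp ha'
  refine ⟨p, hp, ?_⟩
  rw [hpa]
  -- a ≤ kdist
  have ha0 : 0 ≤ a := sortedDists_nonneg P x a hamem
  have hmin : ∀ r ∈ sortedDists P x, a ≤ r := by
    intro r hr
    have hs := Multiset.pairwise_sort (P.val.map (dist x)) (· ≤ ·)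
    rw [show Multiset.sort (P.val.map (dist x)) (· ≤ ·) = sortedDists P x from rfl, hL,
      List.pairwise_cons] at hs
    rw [hL] at hr
    rcases List.mem_cons.mp hr with rfl | hr
    · exact le_refl _
    · exact hs.1 r hr
  set T := (sortedDists P x).take k with hT
  have hTlen : T.length = k := by
    rw [hT, List.length_take, sortedDists_length]; omega
  have hlb : ∀ e ∈ T.map (fun r => r ^ 2), a ^ 2 ≤ e := by
    intro e he
    obtain ⟨r, hr, rfl⟩ := List.mem_map.mp he
    have := hmin r (List.mem_of_mem_take hr)
    exact pow_le_pow_left₀ ha0 this 2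
  have hsum : (k : ℝ) * a ^ 2 ≤ (T.map (fun r => r ^ 2)).sum := by
    have := List.card_nsmul_le_sum (T.map (fun r => r ^ 2)) (a ^ 2) hlb
    rwa [List.length_map, hTlen, nsmul_eq_mul] at this
  have hk0 : (0:ℝ) < k := by exact_mod_cast hk
  have : a ^ 2 ≤ (1 / (k:ℝ)) * (T.map (fun r => r ^ 2)).sum := by
    rw [one_div, inv_mul_eq_div, le_div_iff₀ hk0]
    nlinarith [hsum]
  calc a = Real.sqrt (a ^ 2) := (Real.sqrt_sq ha0).symm
    _ ≤ kdist P k x := Real.sqrt_le_sqrt this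

private lemma list_cs (l : List ℝ) :
    l.sum ^ 2 ≤ l.length * (l.map (fun r => r ^ 2)).sum := by
  have h1 : l.sum = ∑ i : Fin l.length, l.get i := by
    conv_lhs => rw [← List.ofFn_get l]
    rw [List.sum_ofFn]
  have h2 : (l.map (fun r => r ^ 2)).sum = ∑ i : Fin l.length, (l.get i) ^ 2 := by
    conv_lhs => rw [← List.ofFn_get l, List.map_ofFn]
    rw [List.sum_ofFn]; rfl
  rw [h1, h2]
  have := sq_sum_le_card_mul_sum_sq (s := (Finset.univ : Finset (Fin l.length)))
    (f := fun i => l.get i)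
  simpa using this

private lemma sum_sq_add (d : ℝ) : ∀ l : List ℝ,
    (l.map (fun a => (a + d) ^ 2)).sum
      = (l.map (fun a => a ^ 2)).sum + 2 * d * l.sum + l.length * d ^ 2
  | [] => by simp
  | a :: l => by
    simp only [List.map_cons, List.sum_cons, sum_sq_add d l, List.length_cons]
    push_cast
    ring

private lemma sum_sq_le_of_forall2 : ∀ {l m : List ℝ}, List.Forall₂ (· ≤ ·) l m →
    (∀ a ∈ l, 0 ≤ a) →
    (l.map (fun a => a ^ 2)).sum ≤ (m.map (fun a => a ^ 2)).sum := by
  intro l m h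
  induction h with
  | nil => intro; simp
  | cons hab h ih =>
    intro hnn
    simp only [List.map_cons, List.sum_cons]
    have h0 := hnn _ (List.mem_cons_self)
    have := ih (fun a ha => hnn a (List.mem_cons_of_mem _ ha))
    nlinarith [hab]

private lemma kdist_triangle (P : Finset X) (k : ℕ) (hk : 1 ≤ k) (hkP : k ≤ P.card)
    (x p : X) : kdist P k p ≤ kdist P k x + dist x p := by
  set d := dist x p with hdd
  have hd : 0 ≤ d := dist_nonneg
  have hrel : Multiset.Rel (· ≤ ·) (P.val.map (dist p))
      (P.val.map (fun q => dist x q + d)) := by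
    rw [Multiset.rel_map]
    apply Multiset.rel_refl_of_refl_on
    intro q hq
    calc dist p q ≤ dist p x + dist x q := dist_triangle p x q
      _ = dist x q + d := by rw [hdd, dist_comm p x]; ring
  have h2 := forall2_sort_of_rel (Multiset.card (P.val.map (dist p))) _ _ rfl hrel
  have hsortmap : (P.val.map (fun q => dist x q + d)).sort (· ≤ ·)
      = (sortedDists P x).map (fun a => a + d) := by
    refine (fun hp h1 h2 => List.Perm.eq_of_pairwise' (r := (· ≤ ·)) h1 h2 hp) ?_ ?_ ?_
    · rw [← Multiset.coe_eq_coe, Multiset.sort_eq, ← Multiset.map_coe]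
      rw [show ((sortedDists P x : List ℝ) : Multiset ℝ) = P.val.map (dist x) from
        Multiset.sort_eq _ _]
      rw [Multiset.map_map]
      rfl
    · exact Multiset.pairwise_sort _ _
    · have hs : (sortedDists P x).Pairwise (· ≤ ·) := Multiset.pairwise_sort _ _
      exact List.Pairwise.map _ (fun a b hab => by simpa using hab) hs
  rw [hsortmap] at h2
  have h3 := List.forall₂_take k h2
  rw [← List.map_take] at h3
  set Tp := (sortedDists P p).take k with hTp
  set Tx := (sortedDists P x).take k with hTx
  have h4 : (Tp.map (fun a => a ^ 2)).sum ≤ ((Tx.map (fun a => a + d)).map (fun a => a ^ 2)).sum :=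
    sum_sq_le_of_forall2 h3 (fun a ha => sortedDists_nonneg P p a (List.mem_of_mem_take ha))
  rw [List.map_map] at h4
  have h4' : (Tp.map (fun a => a ^ 2)).sum ≤ (Tx.map (fun a => (a + d) ^ 2)).sum := h4
  have hTxlen : (Tx.length : ℝ) = (k : ℝ) := by
    rw [hTx, List.length_take, sortedDists_length]
    norm_cast
    omega
  have h5 := sum_sq_add d Tx
  have h6 := list_cs Tx
  rw [hTxlen] at h5 h6
  set A := (Tx.map (fun a => a ^ 2)).sum with hA
  set S := Tx.sum with hS
  have hS0 : 0 ≤ S := List.sum_nonneg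
    (fun a ha => sortedDists_nonneg P x a (List.mem_of_mem_take ha))
  have hA0 : 0 ≤ A := List.sum_nonneg (by
    intro a ha
    obtain ⟨r, _, rfl⟩ := List.mem_map.mp ha
    positivity)
  have hk0 : (0 : ℝ) < k := by exact_mod_cast hk
  set m := Real.sqrt ((1 / (k : ℝ)) * A) with hm
  have hm0 : 0 ≤ m := Real.sqrt_nonneg _
  have hm2 : m ^ 2 = (1 / (k : ℝ)) * A := Real.sq_sqrt (by positivity)
  have hm2' : m ^ 2 * k = A := by
    rw [hm2]; field_simp
  -- S ≤ k * m
  have hSkm : S ≤ (k : ℝ) * m := by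
    have h7 : S ^ 2 ≤ ((k : ℝ) * m) ^ 2 := by nlinarith [h6]
    calc S = Real.sqrt (S ^ 2) := (Real.sqrt_sq hS0).symm
      _ ≤ Real.sqrt (((k : ℝ) * m) ^ 2) := Real.sqrt_le_sqrt h7
      _ = (k : ℝ) * m := Real.sqrt_sq (by positivity)
  -- main bound
  have hmain : (1 / (k : ℝ)) * (Tp.map (fun a => a ^ 2)).sum ≤ (m + d) ^ 2 := by
    rw [one_div, inv_mul_eq_div, div_le_iff₀ hk0]
    have hds : d * S ≤ d * ((k : ℝ) * m) := mul_le_mul_of_nonneg_left hSkm hd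
    nlinarith [h4', h5, hds, hm2']
  calc kdist P k p = Real.sqrt ((1 / (k : ℝ)) * (Tp.map (fun a => a ^ 2)).sum) := rfl
    _ ≤ Real.sqrt ((m + d) ^ 2) := Real.sqrt_le_sqrt hmain
    _ = m + d := Real.sqrt_sq (by positivity)
    _ = kdist P k x + dist x p := rfl

private lemma mem_declutterAux {Y : Type*} (d : Y → Y → ℝ) (f : Y → ℝ) :
    ∀ (L Q0 : List Y), ∀ q ∈ Q0, q ∈ declutterAux d f Q0 L
  | [], Q0, q, hq => by rw [declutterAux]; exact hq
  | p :: rest, Q0, q, hq => by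
    rw [declutterAux]
    split
    · exact mem_declutterAux d f rest (Q0 ++ [p]) q (List.mem_append_left _ hq)
    · exact mem_declutterAux d f rest Q0 q hq

private lemma declutterAux_covers {Y : Type*} (d : Y → Y → ℝ) (f : Y → ℝ) :
    ∀ (L Q0 : List Y), ∀ p ∈ L, d p p ≤ 0 → 0 ≤ f p →
      ∃ q ∈ declutterAux d f Q0 L, d p q ≤ 2 * f p
  | p' :: rest, Q0, p, hp, hdp, hfp => by
    rw [declutterAux]
    split
    case isTrue h =>
      rcases List.mem_cons.mp hp with rfl | hp'
      · exact ⟨p, mem_declutterAux d f rest _ p (by simp), by linarith⟩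
      · exact declutterAux_covers d f rest (Q0 ++ [p']) p hp' hdp hfp
    case isFalse h =>
      rcases List.mem_cons.mp hp with rfl | hp'
      · push_neg at h
        obtain ⟨q, hq, hlt⟩ := h
        exact ⟨q, mem_declutterAux d f rest Q0 q hq, le_of_lt hlt⟩
      · exact declutterAux_covers d f rest Q0 p hp' hdp hfp

/-- Adaptive case: every point of `K` has a point of the Declutter output within
`5 ε f(x)`. -/
theorem declutter_covers_adaptive (P : Finset X) (k : ℕ) (hk : 1 ≤ k)
    (hkP : k ≤ P.card) (K : Set X) (hK : IsCompact K) (hKne : K.Nonempty)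
    (f : X → ℝ) (hfpos : ∀ x ∈ K, 0 < f x)
    (hflip : ∀ x ∈ K, ∀ y ∈ K, |f x - f y| ≤ dist x y)
    (ε : ℝ) (hsample : AdaptiveNoisySample P k K f ε)
    (Q : List X) (hQ : IsDeclutterOutput (fun a b => dist a b) (kdist P k) P Q) :
    ∀ x ∈ K, ∃ q ∈ Q, dist x q ≤ 5 * ε * f x := by
  intro x hx
  obtain ⟨L, hperm, hsorted, hQdef⟩ := hQ
  obtain ⟨p, hpP, hpx⟩ := exists_near P k hk hkP x
  have hkx : kdist P k x ≤ ε * f x := hsample.1 x hx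
  have hpL : p ∈ L := by rw [hperm.mem_iff, Finset.mem_toList]; exact hpP
  have h0 : (0 : ℝ) ≤ kdist P k p := Real.sqrt_nonneg _
  obtain ⟨q, hqQ, hdq⟩ := declutterAux_covers (fun a b => dist a b) (kdist P k) L [] p hpL
    (by simp) h0
  have hdq' : dist p q ≤ 2 * kdist P k p := hdq
  refine ⟨q, by rw [hQdef]; exact hqQ, ?_⟩
  have htri := kdist_triangle P k hk hkP x p
  calc dist x q ≤ dist x p + dist p q := dist_triangle x p q
    _ ≤ 5 * ε * f x := by linarith
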